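/- Suppose ε ∈ (0,1), σ_a, σ_t : X → ℝ are measurable functions with 0 < σ_a^min ≤ σ_a ≤ σ_t ≤ σ^max a.e. on a measure space X, and suppose u₁,…,u_L, f₁,…,f_L ∈ L²(X) satisfy the energy identity ε∫σ_a u₁² + (1/ε)∑_{i=2}^L ∫σ_t u_i² = ε ∑_{i=1}^L ∫ f_i u_i. Then there is a constant C independent of ε such that ‖u₁‖ ≤ C(‖f₁‖ + ε∑_{i=2}^L‖f_i‖) and ‖u_i‖ ≤ C(ε‖f₁‖ + ε²∑_{j=2}^L‖f_j‖) for i = 2,…,L. -/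

import Mathlib

open MeasureTheory Real

lemma my_integral_CS {X : Type*} [MeasurableSpace X] (μ : Measure X)
    (f g : X → ℝ) (hfm : AEStronglyMeasurable f μ) (hgm : AEStronglyMeasurable g μ)
    (hf2 : Integrable (fun x => f x ^ 2) μ) (hg2 : Integrable (fun x => g x ^ 2) μ) :
    ∫ x, f x * g x ∂μ ≤ Real.sqrt (∫ x, f x ^ 2 ∂μ) * Real.sqrt (∫ x, g x ^ 2 ∂μ) := by
  set F := ∫ x, f x ^ 2 ∂μ with hF
  set G := ∫ x, g x ^ 2 ∂μ with hG
  set I := ∫ x, f x * g x ∂μ with hI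
  have hF0 : 0 ≤ F := integral_nonneg fun x => sq_nonneg _
  have hG0 : 0 ≤ G := integral_nonneg fun x => sq_nonneg _
  have hfg : Integrable (fun x => f x * g x) μ := by
    refine Integrable.mono' (hf2.add hg2) (hfm.mul hgm) (Filter.Eventually.of_forall fun x => ?_)
    simp only [Pi.add_apply]
    rw [Real.norm_eq_abs, abs_mul]
    nlinarith [sq_nonneg (|f x| - |g x|), sq_abs (f x), sq_abs (g x), abs_nonneg (f x), abs_nonneg (g x)]
  have key : ∀ t : ℝ, 2 * t * I ≤ F + t ^ 2 * G := by
    intro t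
    have h1 : ∫ x, 2 * t * (f x * g x) ∂μ ≤ ∫ x, (f x ^ 2 + t ^ 2 * g x ^ 2) ∂μ :=
      integral_mono (hfg.const_mul _) (hf2.add (hg2.const_mul _))
        (fun x => by nlinarith [sq_nonneg (f x - t * g x)])
    rwa [integral_const_mul, integral_add hf2 (hg2.const_mul _), integral_const_mul] at h1
  rcases le_or_gt I 0 with hI0 | hI0
  · exact hI0.trans (by positivity)
  rcases eq_or_lt_of_le hG0 with hG0' | hG0'
  · exfalso
    have := key ((F + 1) / (2 * I))
    rw [← hG0'] at this
    have h2 : 2 * ((F + 1) / (2 * I)) * I = F + 1 := by field_simp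
    linarith [this, h2.symm.le]
  · have := key (I / G)
    have h2 : I ^ 2 ≤ F * G := by
      have hGne : G ≠ 0 := ne_of_gt hG0'
      have h3 : 2 * (I / G) * I = 2 * (I ^ 2 / G) := by ring
      have h4 : (I / G) ^ 2 * G = I ^ 2 / G := by field_simp
      rw [h3, h4] at this
      have h5 : I ^ 2 / G ≤ F := by linarith
      exact (div_le_iff₀ hG0').mp h5
    calc I = Real.sqrt (I ^ 2) := (Real.sqrt_sq hI0.le).symm
      _ ≤ Real.sqrt (F * G) := Real.sqrt_le_sqrt h2
      _ = Real.sqrt F * Real.sqrt G := Real.sqrt_mul hF0 _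

/-- A priori estimate (Lemma 2.3): from the energy identity
`ε ∫ σ_a u₁² + (1/ε) ∑_{i≥2} ∫ σ_t u_i² = ε ∑_i ∫ f_i u_i`
with `0 < σ_a^min ≤ σ_a ≤ σ_t ≤ σ^max` a.e., one gets
`‖u₁‖ ≤ C (‖f₁‖ + ε ∑_{i≥2} ‖f_i‖)` and
`‖u_i‖ ≤ C (ε ‖f₁‖ + ε² ∑_{j≥2} ‖f_j‖)` for `i ≥ 2`,
with `C` independent of `ε` (depending only on `σ_a^min`, `σ^max` and `L`).
Here `‖g‖ = (∫ g²)^{1/2}` is the `L²(X)` norm. -/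
theorem stmt1 (X : Type*) [MeasurableSpace X] (μ : Measure X)
    (L : ℕ) (hL : 1 ≤ L) (σa σt : X → ℝ) (σamin σmax : ℝ)
    (hσmin : 0 < σamin)
    (hσ : ∀ᵐ x ∂μ, σamin ≤ σa x ∧ σa x ≤ σt x ∧ σt x ≤ σmax)
    (hσam : Measurable σa) (hσtm : Measurable σt) :
    ∃ C : ℝ, 0 < C ∧
      ∀ (ε : ℝ), 0 < ε → ε < 1 →
      ∀ (u f : Fin L → X → ℝ),
        (∀ i, Measurable (u i)) → (∀ i, Measurable (f i)) →
        (∀ i, Integrable (fun x => (u i x) ^ 2) μ) →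
        (∀ i, Integrable (fun x => (f i x) ^ 2) μ) →
        -- energy identity obtained by testing the P_N system with its own solution
        (ε * ∫ x, σa x * (u ⟨0, hL⟩ x) ^ 2 ∂μ
            + (1 / ε) * ∑ i ∈ Finset.univ.erase (⟨0, hL⟩ : Fin L),
                ∫ x, σt x * (u i x) ^ 2 ∂μ
          = ε * ∑ i : Fin L, ∫ x, f i x * u i x ∂μ) →
        (Real.sqrt (∫ x, (u ⟨0, hL⟩ x) ^ 2 ∂μ)
            ≤ C * (Real.sqrt (∫ x, (f ⟨0, hL⟩ x) ^ 2 ∂μ)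
              + ε * ∑ i ∈ Finset.univ.erase (⟨0, hL⟩ : Fin L),
                  Real.sqrt (∫ x, (f i x) ^ 2 ∂μ)))
        ∧ ∀ i ∈ Finset.univ.erase (⟨0, hL⟩ : Fin L),
            Real.sqrt (∫ x, (u i x) ^ 2 ∂μ)
              ≤ C * (ε * Real.sqrt (∫ x, (f ⟨0, hL⟩ x) ^ 2 ∂μ)
                + ε ^ 2 * ∑ j ∈ Finset.univ.erase (⟨0, hL⟩ : Fin L),
                    Real.sqrt (∫ x, (f j x) ^ 2 ∂μ)) := by
  refine ⟨σamin⁻¹, by positivity, ?_⟩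
  intro ε hε hε1 u f hum hfm hu2 hf2 hE
  set z : Fin L := ⟨0, hL⟩ with hz
  set s : Finset (Fin L) := Finset.univ.erase z with hs
  have nu_nn : ∀ i, (0:ℝ) ≤ ∫ x, (u i x) ^ 2 ∂μ := fun i => integral_nonneg fun x => sq_nonneg _
  have nf_nn : ∀ i, (0:ℝ) ≤ ∫ x, (f i x) ^ 2 ∂μ := fun i => integral_nonneg fun x => sq_nonneg _
  -- a.e. bounds on the coefficients
  have hσa_bd : ∀ᵐ x ∂μ, ‖σa x‖ ≤ σmax := by
    filter_upwards [hσ] with x hx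
    rw [Real.norm_eq_abs, abs_le]
    constructor <;> nlinarith [hx.1, hx.2.1, hx.2.2]
  have hσt_bd : ∀ᵐ x ∂μ, ‖σt x‖ ≤ σmax := by
    filter_upwards [hσ] with x hx
    rw [Real.norm_eq_abs, abs_le]
    constructor <;> nlinarith [hx.1, hx.2.1, hx.2.2]
  have hIa : Integrable (fun x => σa x * (u z x) ^ 2) μ :=
    (hu2 z).bdd_mul hσam.aestronglyMeasurable hσa_bd
  have hIt : ∀ i, Integrable (fun x => σt x * (u i x) ^ 2) μ := fun i =>
    (hu2 i).bdd_mul hσtm.aestronglyMeasurable hσt_bd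
  -- lower bounds on the two energy pieces
  have h1 : σamin * ∫ x, (u z x) ^ 2 ∂μ ≤ ∫ x, σa x * (u z x) ^ 2 ∂μ := by
    have := integral_mono_ae ((hu2 z).const_mul σamin) hIa
      (by filter_upwards [hσ] with x hx
          exact mul_le_mul_of_nonneg_right hx.1 (sq_nonneg _))
    rwa [integral_const_mul] at this
  have h2 : ∀ i, σamin * ∫ x, (u i x) ^ 2 ∂μ ≤ ∫ x, σt x * (u i x) ^ 2 ∂μ := by
    intro i
    have := integral_mono_ae ((hu2 i).const_mul σamin) (hIt i)
      (by filter_upwards [hσ] with x hx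
          exact mul_le_mul_of_nonneg_right (hx.1.trans hx.2.1) (sq_nonneg _))
    rwa [integral_const_mul] at this
  -- Cauchy-Schwarz on the right-hand side
  have h3 : ∀ i, ∫ x, f i x * u i x ∂μ ≤
      Real.sqrt (∫ x, (f i x) ^ 2 ∂μ) * Real.sqrt (∫ x, (u i x) ^ 2 ∂μ) := fun i =>
    my_integral_CS μ (f i) (u i) (hfm i).aestronglyMeasurable (hum i).aestronglyMeasurable
      (hf2 i) (hu2 i)
  set A := ∫ x, (u z x) ^ 2 ∂μ with hA
  set B := ∑ i ∈ s, ∫ x, (u i x) ^ 2 ∂μ with hB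
  have hB0 : 0 ≤ B := Finset.sum_nonneg fun i _ => nu_nn i
  have hsum_t : σamin * B ≤ ∑ i ∈ s, ∫ x, σt x * (u i x) ^ 2 ∂μ := by
    rw [hB, Finset.mul_sum]
    exact Finset.sum_le_sum fun i _ => h2 i
  have hRHS : ∑ i : Fin L, (∫ x, f i x * u i x ∂μ) ≤
      ∑ i : Fin L, Real.sqrt (∫ x, (f i x) ^ 2 ∂μ) * Real.sqrt (∫ x, (u i x) ^ 2 ∂μ) :=
    Finset.sum_le_sum fun i _ => h3 i
  have key0 : ε * (σamin * A) + (1 / ε) * (σamin * B) ≤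
      ε * ∑ i : Fin L, Real.sqrt (∫ x, (f i x) ^ 2 ∂μ) * Real.sqrt (∫ x, (u i x) ^ 2 ∂μ) := by
    have e1 : ε * (σamin * A) ≤ ε * ∫ x, σa x * (u z x) ^ 2 ∂μ :=
      mul_le_mul_of_nonneg_left h1 hε.le
    have e2 : (1 / ε) * (σamin * B) ≤ (1 / ε) * ∑ i ∈ s, ∫ x, σt x * (u i x) ^ 2 ∂μ :=
      mul_le_mul_of_nonneg_left hsum_t (by positivity)
    have e3 : ε * ∑ i : Fin L, (∫ x, f i x * u i x ∂μ) ≤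
        ε * ∑ i : Fin L, Real.sqrt (∫ x, (f i x) ^ 2 ∂μ) * Real.sqrt (∫ x, (u i x) ^ 2 ∂μ) :=
      mul_le_mul_of_nonneg_left hRHS hε.le
    linarith [hE]
  have key1 : σamin * (A + B / ε ^ 2) ≤
      ∑ i : Fin L, Real.sqrt (∫ x, (f i x) ^ 2 ∂μ) * Real.sqrt (∫ x, (u i x) ^ 2 ∂μ) := by
    refine le_of_mul_le_mul_left ?_ hε
    have heq : ε * (σamin * (A + B / ε ^ 2)) = ε * (σamin * A) + (1 / ε) * (σamin * B) := by
      field_simp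
    rw [heq]
    exact key0
  set Q := Real.sqrt (A + B / ε ^ 2) with hQ
  have hABnn : 0 ≤ A + B / ε ^ 2 := by positivity
  have hQnn : 0 ≤ Q := Real.sqrt_nonneg _
  have hQsq : Q ^ 2 = A + B / ε ^ 2 := Real.sq_sqrt hABnn
  have haz : Real.sqrt A ≤ Q :=
    Real.sqrt_le_sqrt (by linarith [div_nonneg hB0 (sq_nonneg ε)])
  have hai : ∀ i ∈ s, Real.sqrt (∫ x, (u i x) ^ 2 ∂μ) ≤ ε * Q := by
    intro i hi
    have hle : (∫ x, (u i x) ^ 2 ∂μ) ≤ ε ^ 2 * (A + B / ε ^ 2) := by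
      have h4 : (∫ x, (u i x) ^ 2 ∂μ) ≤ B := by
        rw [hB]
        exact Finset.single_le_sum (fun j _ => nu_nn j) hi
      have h5 : ε ^ 2 * (A + B / ε ^ 2) = ε ^ 2 * A + B := by
        field_simp
      nlinarith [nu_nn z, sq_nonneg ε, mul_nonneg (sq_nonneg ε) (nu_nn z)]
    calc Real.sqrt (∫ x, (u i x) ^ 2 ∂μ) ≤ Real.sqrt (ε ^ 2 * (A + B / ε ^ 2)) :=
          Real.sqrt_le_sqrt hle
      _ = ε * Q := by rw [Real.sqrt_mul (sq_nonneg ε), Real.sqrt_sq hε.le]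
  set S := Real.sqrt (∫ x, (f z x) ^ 2 ∂μ) + ε * ∑ i ∈ s, Real.sqrt (∫ x, (f i x) ^ 2 ∂μ)
    with hSdef
  have hS0 : 0 ≤ S := by
    rw [hSdef]
    have : 0 ≤ ∑ i ∈ s, Real.sqrt (∫ x, (f i x) ^ 2 ∂μ) :=
      Finset.sum_nonneg fun i _ => Real.sqrt_nonneg _
    positivity
  have hsplit : ∑ i : Fin L, Real.sqrt (∫ x, (f i x) ^ 2 ∂μ) * Real.sqrt (∫ x, (u i x) ^ 2 ∂μ)
      = Real.sqrt (∫ x, (f z x) ^ 2 ∂μ) * Real.sqrt A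
        + ∑ i ∈ s, Real.sqrt (∫ x, (f i x) ^ 2 ∂μ) * Real.sqrt (∫ x, (u i x) ^ 2 ∂μ) := by
    rw [hA, hs]
    exact (Finset.add_sum_erase Finset.univ _ (Finset.mem_univ z)).symm
  have key2 : σamin * Q ^ 2 ≤ S * Q := by
    rw [hQsq]
    have t1 : Real.sqrt (∫ x, (f z x) ^ 2 ∂μ) * Real.sqrt A
        ≤ Real.sqrt (∫ x, (f z x) ^ 2 ∂μ) * Q :=
      mul_le_mul_of_nonneg_left haz (Real.sqrt_nonneg _)
    have t2 : ∑ i ∈ s, Real.sqrt (∫ x, (f i x) ^ 2 ∂μ) * Real.sqrt (∫ x, (u i x) ^ 2 ∂μ)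
        ≤ ∑ i ∈ s, Real.sqrt (∫ x, (f i x) ^ 2 ∂μ) * (ε * Q) :=
      Finset.sum_le_sum fun i hi =>
        mul_le_mul_of_nonneg_left (hai i hi) (Real.sqrt_nonneg _)
    have t3 : ∑ i ∈ s, Real.sqrt (∫ x, (f i x) ^ 2 ∂μ) * (ε * Q)
        = (∑ i ∈ s, Real.sqrt (∫ x, (f i x) ^ 2 ∂μ)) * (ε * Q) := by
      rw [Finset.sum_mul]
    have t4 : Real.sqrt (∫ x, (f z x) ^ 2 ∂μ) * Q
        + (∑ i ∈ s, Real.sqrt (∫ x, (f i x) ^ 2 ∂μ)) * (ε * Q) = S * Q := by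
      rw [hSdef]; ring
    calc σamin * (A + B / ε ^ 2)
        ≤ ∑ i : Fin L, Real.sqrt (∫ x, (f i x) ^ 2 ∂μ) * Real.sqrt (∫ x, (u i x) ^ 2 ∂μ) :=
          key1
      _ = Real.sqrt (∫ x, (f z x) ^ 2 ∂μ) * Real.sqrt A
          + ∑ i ∈ s, Real.sqrt (∫ x, (f i x) ^ 2 ∂μ) * Real.sqrt (∫ x, (u i x) ^ 2 ∂μ) :=
          hsplit
      _ ≤ S * Q := by rw [← t4]; rw [t3] at t2; linarith [t1, t2]
  have hQle : Q ≤ σamin⁻¹ * S := by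
    rcases eq_or_lt_of_le hQnn with h | h
    · rw [← h]
      exact mul_nonneg (by positivity) hS0
    · have hq : σamin * Q ≤ S := by
        have hQQ : σamin * Q * Q = σamin * Q ^ 2 := by ring
        exact le_of_mul_le_mul_right (by rw [hQQ]; exact key2) h
      calc Q = σamin⁻¹ * (σamin * Q) := by field_simp
        _ ≤ σamin⁻¹ * S := mul_le_mul_of_nonneg_left hq (by positivity)
  constructor
  · exact haz.trans hQle
  · intro i hi
    have e1 : Real.sqrt (∫ x, (u i x) ^ 2 ∂μ) ≤ ε * Q := hai i hi
    have e2 : ε * Q ≤ ε * (σamin⁻¹ * S) := mul_le_mul_of_nonneg_left hQle hε.le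
    have e3 : ε * (σamin⁻¹ * S) = σamin⁻¹ * (ε * Real.sqrt (∫ x, (f z x) ^ 2 ∂μ)
        + ε ^ 2 * ∑ j ∈ s, Real.sqrt (∫ x, (f j x) ^ 2 ∂μ)) := by
      rw [hSdef]; ring
    linarith [e1, e2, e3.le]
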